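/- Every natural number can be written as the sum of three Tribternary numbers. -/

import Mathlib

/-- A natural number is Tribternary if all its base-3 digits are 0 or 1 and no
    three consecutive base-3 digits are all 1. -/
def Tribternary (n : ℕ) : Prop :=
  (∀ d ∈ Nat.digits 3 n, d = 0 ∨ d = 1) ∧
  ∀ i : ℕ, ¬((Nat.digits 3 n).getD i 0 = 1 ∧ (Nat.digits 3 n).getD (i + 1) 0 = 1 ∧
    (Nat.digits 3 n).getD (i + 2) 0 = 1)

/-- the bit given to summand `j` at a position with residue `r = i % 3`, when the
    base-3 digit of `n` there is `d`. -/
def bbit (j r d : ℕ) : ℕ :=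
  if d = 1 then (if (r + 1) % 3 = j then 1 else 0)
  else if d = 2 then (if r = j then 0 else 1)
  else 0

lemma bbit_le_one (j r d : ℕ) : bbit j r d ≤ 1 := by
  unfold bbit; split_ifs <;> omega

lemma bbit_sum : ∀ r < 3, ∀ d < 3, bbit 0 r d + bbit 1 r d + bbit 2 r d = d := by decide

lemma bbit_diag : ∀ j < 3, ∀ d < 3, bbit j j d = 0 := by decide

lemma getD_digits (i : ℕ) : ∀ x : ℕ, (Nat.digits 3 x).getD i 0 = x / 3 ^ i % 3 := by
  induction i with
  | zero =>
    intro x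
    rcases Nat.eq_zero_or_pos x with rfl | hx
    · simp
    · rw [Nat.digits_def' (by norm_num : 1 < 3) hx]; simp
  | succ i ih =>
    intro x
    rcases Nat.eq_zero_or_pos x with rfl | hx
    · simp
    · rw [Nat.digits_def' (by norm_num : 1 < 3) hx]
      simp only [List.getD_cons_succ, ih (x / 3)]
      rw [pow_succ, Nat.div_div_eq_div_mul]
      ring_nf

lemma sum_digits_eq (n L : ℕ) (h : n < 3 ^ L) :
    ∑ i ∈ Finset.range L, (n / 3 ^ i % 3) * 3 ^ i = n := by
  have key : ∀ M : ℕ, ∑ i ∈ Finset.range M, (n / 3 ^ i % 3) * 3 ^ i = n % 3 ^ M := by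
    intro M
    induction M with
    | zero => simp [Nat.mod_one]
    | succ M ih =>
      rw [Finset.sum_range_succ, ih, pow_succ, Nat.mod_mul]
      ring
  rw [key, Nat.mod_eq_of_lt h]

lemma sum_lt (L : ℕ) (f : ℕ → ℕ) (hf : ∀ i, f i < 3) :
    ∑ i ∈ Finset.range L, f i * 3 ^ i < 3 ^ L := by
  induction L with
  | zero => simp
  | succ L ih =>
    rw [Finset.sum_range_succ, pow_succ]
    have := hf L
    nlinarith [pow_pos (by norm_num : (0:ℕ) < 3) L]

lemma sum_div_pow_mod (L k : ℕ) (f : ℕ → ℕ) (hf : ∀ i, f i < 3) :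
    (∑ i ∈ Finset.range L, f i * 3 ^ i) / 3 ^ k % 3 = if k < L then f k else 0 := by
  by_cases hk : k < L
  · simp only [hk, if_true]
    have hsplit : ∑ i ∈ Finset.range L, f i * 3 ^ i
        = (∑ i ∈ Finset.range k, f i * 3 ^ i) + f k * 3 ^ k
          + ∑ i ∈ Finset.Ico (k+1) L, f i * 3 ^ i := by
      rw [← Finset.sum_range_succ, Finset.sum_range_add_sum_Ico _ (by omega : k + 1 ≤ L)]
    have hdvd : (3 : ℕ) ^ (k+1) ∣ ∑ i ∈ Finset.Ico (k+1) L, f i * 3 ^ i := by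
      refine Finset.dvd_sum fun i hi => ?_
      exact Dvd.dvd.mul_left (pow_dvd_pow 3 (Finset.mem_Ico.mp hi).1) _
    obtain ⟨C, hC⟩ := hdvd
    have hA : (∑ i ∈ Finset.range k, f i * 3 ^ i) < 3 ^ k := sum_lt k f hf
    rw [hsplit, hC, pow_succ]
    have : (∑ i ∈ Finset.range k, f i * 3 ^ i) + f k * 3 ^ k + 3 ^ k * 3 * C
        = (∑ i ∈ Finset.range k, f i * 3 ^ i) + 3 ^ k * (f k + 3 * C) := by ring
    rw [this, Nat.add_mul_div_left _ _ (pow_pos (by norm_num) k),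
      Nat.div_eq_of_lt hA, zero_add, Nat.add_mul_mod_self_left,
      Nat.mod_eq_of_lt (hf k)]
  · simp only [hk, if_false]
    have : (∑ i ∈ Finset.range L, f i * 3 ^ i) < 3 ^ k :=
      lt_of_lt_of_le (sum_lt L f hf) (pow_le_pow_right₀ (by norm_num) (by omega))
    rw [Nat.div_eq_of_lt this]

lemma trib_of_bits (n L j : ℕ) (hj : j < 3) :
    Tribternary (∑ i ∈ Finset.range L, bbit j (i % 3) (n / 3 ^ i % 3) * 3 ^ i) := by
  set f : ℕ → ℕ := fun i => bbit j (i % 3) (n / 3 ^ i % 3) with hfdef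
  have hf3 : ∀ i, f i < 3 := fun i => lt_of_le_of_lt (bbit_le_one _ _ _) (by norm_num)
  set a := ∑ i ∈ Finset.range L, f i * 3 ^ i with ha
  have hd : ∀ k, (Nat.digits 3 a).getD k 0 = if k < L then f k else 0 := by
    intro k
    rw [getD_digits, ha, sum_div_pow_mod L k f hf3]
  have hf1 : ∀ i, f i ≤ 1 := fun i => bbit_le_one _ _ _
  constructor
  · intro dg hdg
    obtain ⟨idx, hidx, hval⟩ := List.mem_iff_getElem.mp hdg
    have hdgval : (Nat.digits 3 a).getD idx 0 = dg := by
      rw [List.getD_eq_getElem _ _ hidx, hval]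
    rw [hd idx] at hdgval
    have hb := hf1 idx
    split_ifs at hdgval <;> omega
  · intro i ⟨h0, h1, h2⟩
    have hmod : i % 3 = j ∨ (i + 1) % 3 = j ∨ (i + 2) % 3 = j := by omega
    have key : ∀ p : ℕ, p % 3 = j → (Nat.digits 3 a).getD p 0 ≠ 1 := by
      intro p hp
      rw [hd p]
      split_ifs with h
      · rw [hfdef]
        simp only
        rw [hp, bbit_diag j hj (n / 3 ^ p % 3) (Nat.mod_lt _ (by norm_num))]
        omega
      · omega
    rcases hmod with h | h | h
    · exact key i h h0
    · exact key (i + 1) h h1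
    · exact key (i + 2) h h2

/-- Every natural number is the sum of three Tribternary numbers. -/
theorem sum_of_three_tribternary (n : ℕ) :
    ∃ a b c : ℕ, Tribternary a ∧ Tribternary b ∧ Tribternary c ∧ n = a + b + c := by
  set L := n + 1 with hL
  have hnL : n < 3 ^ L :=
    calc n < n + 1 := Nat.lt_succ_self n
      _ ≤ 3 ^ (n + 1) := (Nat.lt_pow_self (by norm_num : 1 < 3)).le
  refine ⟨∑ i ∈ Finset.range L, bbit 0 (i % 3) (n / 3 ^ i % 3) * 3 ^ i,
    ∑ i ∈ Finset.range L, bbit 1 (i % 3) (n / 3 ^ i % 3) * 3 ^ i,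
    ∑ i ∈ Finset.range L, bbit 2 (i % 3) (n / 3 ^ i % 3) * 3 ^ i,
    trib_of_bits n L 0 (by norm_num), trib_of_bits n L 1 (by norm_num),
    trib_of_bits n L 2 (by norm_num), ?_⟩
  rw [← Finset.sum_add_distrib, ← Finset.sum_add_distrib]
  have : ∀ i ∈ Finset.range L,
      bbit 0 (i % 3) (n / 3 ^ i % 3) * 3 ^ i + bbit 1 (i % 3) (n / 3 ^ i % 3) * 3 ^ i
        + bbit 2 (i % 3) (n / 3 ^ i % 3) * 3 ^ i = (n / 3 ^ i % 3) * 3 ^ i := by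
    intro i _
    rw [← Nat.add_mul, ← Nat.add_mul,
      bbit_sum (i % 3) (Nat.mod_lt _ (by norm_num)) (n / 3 ^ i % 3) (Nat.mod_lt _ (by norm_num))]
  rw [Finset.sum_congr rfl this, sum_digits_eq n L hnL]
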